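/- Existence of a lawless extension matching finitely many prescribed values: given a path S in the tree of finite sequences over a, a node γ ∈ S of length ≥ x+1, and prescribed values c₀,…,c_x ∈ a, there is a family of bijections ξ : ℕ → (a ≃ a) such that the lawless functional ν(ξ) satisfies ν(ξ)(γ̄, y) = c_y for all y ≤ x, where γ̄ is the initial segment of the path of length ≥ x+1. -/

import Mathlib

/-- The lawless functional associated to a family of bijections `ξ`:
`ν(ξ)(w,y) = ξ^[y](w_y)` if `y < length w`, undefined otherwise. -/
def lawless {a : Type} (ξ : ℕ → a ≃ a) (w : List a) (y : ℕ) : Option a :=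
  (w[y]?).map (ξ y)

/-- existence of a lawless extension matching finitely many
prescribed values: given a path `S` in the tree of finite sequences over `a`
(ordered by reverse prefix), a node `γ ∈ S` of length ≥ x+1 and prescribed
values `c 0, …, c x`, there is a family of bijections `ξ` whose lawless
functional takes value `c y` at every node of the path of length > y, for
all `y ≤ x`. -/
theorem lawless_extension_exists {a : Type} [DecidableEq a]
    (S : Set (List a)) (hS : IsMaxChain (fun y x : List a => x <+: y) S)
    (γ : List a) (hγ : γ ∈ S) (x : ℕ) (hlen : x + 1 ≤ γ.length)
    (c : ℕ → a) :
    ∃ ξ : ℕ → a ≃ a,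
      (∀ y ≤ x, lawless ξ γ y = some (c y)) ∧
      (∀ w ∈ S, ∀ y ≤ x, y < w.length → lawless ξ w y = some (c y)) := by
  refine ⟨fun y => Equiv.swap (γ.getD y (c y)) (c y), ?_, ?_⟩
  · intro y hy
    have hylt : y < γ.length := lt_of_lt_of_le (Nat.lt_succ_of_le hy) hlen
    have hget : γ[y]? = some γ[y] := List.getElem?_eq_getElem hylt
    simp [lawless, hget, List.getD_eq_getElem γ (c y) hylt,
      Equiv.swap_apply_left]
  · intro w hw y hy hyw
    have hylt : y < γ.length := lt_of_lt_of_le (Nat.lt_succ_of_le hy) hlen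
    -- w and γ are prefix-comparable
    have hcomp : γ <+: w ∨ w <+: γ := by
      rcases eq_or_ne w γ with rfl | hne
      · exact Or.inr (List.prefix_refl _)
      · rcases hS.1 hw hγ hne with h | h
        · exact Or.inl h
        · exact Or.inr h
    have hgeteq : w[y]? = some γ[y] := by
      rcases hcomp with h | h
      · rw [List.getElem?_eq_getElem hyw, h.getElem hylt]
      · rw [List.getElem?_eq_getElem hyw, ← h.getElem hyw]
    have hg : γ[y]? = some γ[y] := List.getElem?_eq_getElem hylt
    simp [lawless, hgeteq, hg, Equiv.swap_apply_left]
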